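/- Fix a finite simple graph G = (V, E) admitting at least one even homomorphism into a complete graph. Let K_n^{±1} denote the complete graph K_n with independent uniformly random edge weights in {−1, +1}, and for a weighting w set t(G, K_n^w) = n^{−|V|} · Σ_{φ : V → V(K_n)} ∏_{ab ∈ E} w(φ(a)φ(b)), where the product is 0 if φ maps some edge of G to a non-edge (i.e., φ(a) = φ(b)). Then E(t(G, K_n^{±1})) = Θ(n^{−p(G)}) as n → ∞: there exist constants c, C > 0 and N such that for all n ≥ N, c·n^{−p(G)} ≤ E(t(G, K_n^{±1})) ≤ C·n^{−p(G)}. -/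

import Mathlib

open MeasureTheory

noncomputable section

open scoped Classical in
/-- A graph homomorphism `f : G → H` is even if for every edge `e` of `H`, the number of
edges of `G` mapped by `f` onto `e` is even. -/
def IsEvenHom {V V' : Type} [Fintype V] [Fintype V'] {G : SimpleGraph V} {H : SimpleGraph V'}
    (f : G →g H) : Prop :=
  ∀ e ∈ H.edgeFinset, Even ((G.edgeFinset.filter (fun e' => Sym2.map (⇑f) e' = e)).card)

open scoped Classical in
/-- `p(G) = min { |V(G)| − |f(V(G))| : f : G → K_n even }`, computed with `n = |V(G)|`
(the value is independent of `n` once `n ≥ |V(G)|`). -/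
noncomputable def pNat {V : Type} [Fintype V] (G : SimpleGraph V) : ℕ :=
  sInf {k : ℕ | ∃ f : G →g (⊤ : SimpleGraph (Fin (Fintype.card V))), IsEvenHom f ∧
    Fintype.card V - (Finset.univ.image ⇑f).card = k}

open scoped Classical in
/-- `t(G, K_n^w) = n^{-|V|} Σ_{φ : V → [n]} ∏_{ab ∈ E} w(φ(a)φ(b))`, where a factor is `0`
if `φ` maps the edge to a non-edge (i.e. collapses it). -/
noncomputable def tRand {V : Type} [Fintype V] (G : SimpleGraph V) (n : ℕ)
    (w : Sym2 (Fin n) → ℝ) : ℝ :=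
  (∑ φ : V → Fin n, ∏ e ∈ G.edgeFinset,
    if (Sym2.map φ e).IsDiag then 0 else w (Sym2.map φ e)) / (n : ℝ) ^ (Fintype.card V)

open scoped Classical in
/-- The expectation of `t(G, K_n^{±1})` over independent uniform `±1` edge weights. -/
noncomputable def expTRand {V : Type} [Fintype V] (G : SimpleGraph V) (n : ℕ) : ℝ :=
  (∑ w : Sym2 (Fin n) → Bool, tRand G n (fun e => if w e then 1 else -1)) /
    2 ^ (Fintype.card (Sym2 (Fin n)))


open Finset


open scoped Classical in
noncomputable def cnt {V W : Type} [Fintype V] (G : SimpleGraph V) (φ : V → W)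
    (p : Sym2 W) : ℕ :=
  (G.edgeFinset.filter (fun e' => Sym2.map φ e' = p)).card

def Good {V W : Type} [Fintype V] (G : SimpleGraph V) (φ : V → W) : Prop :=
  ∀ p : Sym2 W, (p.IsDiag → cnt G φ p = 0) ∧ Even (cnt G φ p)


private lemma filter_instEq {α : Type} (s : Finset α) (p : α → Prop) (h1 h2 : DecidablePred p) :
    @Finset.filter α p h1 s = @Finset.filter α p h2 s := by
  have : h1 = h2 := funext fun a => Subsingleton.elim _ _
  rw [this]

open scoped Classical in
lemma sum_w_eq {V : Type} [Fintype V] (G : SimpleGraph V) (n : ℕ) (φ : V → Fin n) :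
    ∑ w : Sym2 (Fin n) → Bool, ∏ e ∈ G.edgeFinset,
      (if (Sym2.map φ e).IsDiag then (0:ℝ) else if w (Sym2.map φ e) then 1 else -1)
    = if Good G φ then (2:ℝ) ^ (Fintype.card (Sym2 (Fin n))) else 0 := by
  classical
  have step1 : ∀ w : Sym2 (Fin n) → Bool, ∏ e ∈ G.edgeFinset,
      (if (Sym2.map φ e).IsDiag then (0:ℝ) else if w (Sym2.map φ e) then 1 else -1)
      = ∏ p : Sym2 (Fin n),
        (if p.IsDiag then (0:ℝ) else if w p then 1 else -1) ^ (cnt G φ p) := by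
    intro w
    rw [← Finset.prod_fiberwise_of_maps_to (g := fun e => Sym2.map φ e)
      (t := univ) (fun i _ => mem_univ _)
      (fun e => if (Sym2.map φ e).IsDiag then (0:ℝ) else if w (Sym2.map φ e) then 1 else -1)]
    refine Finset.prod_congr rfl (fun p _ => ?_)
    have hconst : ∀ e ∈ G.edgeFinset.filter (fun e' => Sym2.map φ e' = p),
        (if (Sym2.map φ e).IsDiag then (0:ℝ) else if w (Sym2.map φ e) then 1 else -1)
        = (if p.IsDiag then (0:ℝ) else if w p then 1 else -1) := by
      intro e he
      rw [mem_filter] at he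
      rw [he.2]
    rw [Finset.prod_congr rfl hconst, Finset.prod_const]
    congr 1
    unfold cnt
    exact congrArg Finset.card (filter_instEq _ _ _ _)
  simp only [step1]
  rw [← Fintype.piFinset_univ, Finset.sum_prod_piFinset (univ : Finset Bool)
    (fun p b => (if p.IsDiag then (0:ℝ) else if b then 1 else -1) ^ cnt G φ p)]
  have step3 : ∀ p : Sym2 (Fin n),
      (∑ b ∈ (univ : Finset Bool), (if p.IsDiag then (0:ℝ) else if b then 1 else -1) ^ (cnt G φ p))
      = if (p.IsDiag → cnt G φ p = 0) ∧ Even (cnt G φ p) then 2 else 0 := by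
    intro p
    rw [Fintype.sum_bool]
    by_cases hd : p.IsDiag
    · by_cases h0 : cnt G φ p = 0
      · norm_num [hd, h0]
      · norm_num [hd, h0, zero_pow h0]
    · by_cases he : Even (cnt G φ p)
      · norm_num [hd, he, he.neg_one_pow]
      · norm_num [hd, he, (Nat.odd_iff.mpr (Nat.not_even_iff.mp he)).neg_one_pow]
  rw [Finset.prod_congr rfl (fun p _ => step3 p)]
  by_cases hG : Good G φ
  · rw [if_pos hG, Finset.prod_congr rfl (fun p _ => if_pos (hG p)), Finset.prod_const]
    simp
  · rw [if_neg hG]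
    rw [Good] at hG
    push_neg at hG
    obtain ⟨p, hp⟩ := hG
    exact Finset.prod_eq_zero (mem_univ p) (if_neg (fun h => hp h.1 h.2))

open scoped Classical in
lemma expTRand_eq {V : Type} [Fintype V] (G : SimpleGraph V) (n : ℕ) :
    expTRand G n = ((univ.filter (fun φ : V → Fin n => Good G φ)).card : ℝ) /
      (n : ℝ) ^ (Fintype.card V) := by
  classical
  unfold expTRand tRand
  rw [← Finset.sum_div, Finset.sum_comm]
  have : ∀ φ : V → Fin n, (∑ w : Sym2 (Fin n) → Bool, ∏ e ∈ G.edgeFinset,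
      (if (Sym2.map φ e).IsDiag then (0:ℝ) else if w (Sym2.map φ e) then 1 else -1))
      = if Good G φ then (2:ℝ) ^ (Fintype.card (Sym2 (Fin n))) else 0 := sum_w_eq G n
  rw [Finset.sum_congr rfl (fun φ _ => this φ)]
  rw [Finset.sum_ite, Finset.sum_const, Finset.sum_const_zero, add_zero, nsmul_eq_mul]
  have h2 : ((2:ℝ) ^ (Fintype.card (Sym2 (Fin n)))) ≠ 0 := by positivity
  rw [div_div, mul_comm ((n:ℝ) ^ Fintype.card V) ((2:ℝ) ^ Fintype.card (Sym2 (Fin n))),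
    ← div_div, mul_div_assoc, div_self h2, mul_one]

open scoped Classical in
lemma cnt_comp {V W X : Type} [Fintype V] [Fintype W] [Fintype X] (G : SimpleGraph V)
    (φ : V → W) (σ : W → X) (p : Sym2 X) :
    cnt G (σ ∘ φ) p = ∑ q ∈ univ.filter (fun q => Sym2.map σ q = p), cnt G φ q := by
  classical
  unfold cnt
  rw [Finset.card_eq_sum_card_fiberwise
    (f := fun e' => Sym2.map φ e') (t := univ.filter (fun q => Sym2.map σ q = p))
    (fun x hx => by
      simp only [Finset.mem_coe, mem_filter, mem_univ, true_and] at hx ⊢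
      rw [← hx.2, ← Sym2.map_map])]
  refine Finset.sum_congr rfl (fun q hq => ?_)
  simp only [mem_filter, mem_univ, true_and] at hq
  congr 1
  rw [Finset.filter_filter]
  apply Finset.filter_congr
  intro e' _
  constructor
  · exact fun h => h.2
  · intro h; exact ⟨by rw [← hq, ← h, Sym2.map_map], h⟩

open scoped Classical in
lemma good_comp {V W X : Type} [Fintype V] [Fintype W] [Fintype X] {G : SimpleGraph V}
    {φ : V → W} {σ : W → X} (hφ : Good G φ) (hσ : Set.InjOn σ (Set.range φ)) :
    Good G (σ ∘ φ) := by
  classical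
  intro p
  rw [cnt_comp]
  constructor
  · intro hdiag
    refine Finset.sum_eq_zero (fun q hq => ?_)
    simp only [mem_filter, mem_univ, true_and] at hq
    by_cases h0 : cnt G φ q = 0
    · exact h0
    · have hne : (G.edgeFinset.filter (fun e' => Sym2.map φ e' = q)).Nonempty := by
        rw [← Finset.card_pos]
        exact Nat.pos_of_ne_zero (by unfold cnt at h0; convert h0 using 2)
      obtain ⟨e', he'⟩ := hne
      rw [Finset.mem_filter] at he'
      induction e' using Sym2.ind with
      | _ a b =>
        have hq' : q = s(φ a, φ b) := by rw [← he'.2, Sym2.map_pair_eq]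
        have hp : p = s(σ (φ a), σ (φ b)) := by rw [← hq, hq', Sym2.map_pair_eq]
        rw [hp, Sym2.mk_isDiag_iff] at hdiag
        have : φ a = φ b := hσ ⟨a, rfl⟩ ⟨b, rfl⟩ hdiag
        exact (hφ q).1 (by rw [hq', Sym2.mk_isDiag_iff]; exact this)
  · exact Finset.even_sum _ (fun q _ => (hφ q).2)

open scoped Classical in
lemma good_of_evenHom {V : Type} [Fintype V] {G : SimpleGraph V} {n : ℕ}
    {f : G →g (⊤ : SimpleGraph (Fin n))} (hf : IsEvenHom f) : Good G ⇑f := by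
  have hnd : ∀ e' ∈ G.edgeFinset, ¬ (Sym2.map (⇑f) e').IsDiag := by
    intro e' he'
    induction e' using Sym2.ind with
    | _ a b =>
      rw [SimpleGraph.mem_edgeFinset, SimpleGraph.mem_edgeSet] at he'
      have := f.map_adj he'
      rw [SimpleGraph.top_adj] at this
      rw [Sym2.map_pair_eq, Sym2.mk_isDiag_iff]
      exact this
  intro p
  have key : p.IsDiag → cnt G (⇑f) p = 0 := by
    intro hdiag
    unfold cnt
    simp only [Finset.card_eq_zero, Finset.filter_eq_empty_iff]
    intro e' he' h
    exact hnd e' he' (h ▸ hdiag)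
  refine ⟨key, ?_⟩
  by_cases hdiag : p.IsDiag
  · rw [key hdiag]; exact Even.zero
  · unfold cnt
    refine hf p ?_
    simp only [SimpleGraph.mem_edgeFinset]
    induction p using Sym2.ind with
    | _ x y =>
      rw [SimpleGraph.mem_edgeSet, SimpleGraph.top_adj]
      rwa [Sym2.mk_isDiag_iff] at hdiag

open scoped Classical in
lemma evenHom_of_good {V : Type} [Fintype V] {G : SimpleGraph V} {n : ℕ}
    {φ : V → Fin n} (hφ : Good G φ) :
    ∃ f : G →g (⊤ : SimpleGraph (Fin n)), ⇑f = φ ∧ IsEvenHom f := by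
  have hadj : ∀ {a b : V}, G.Adj a b → φ a ≠ φ b := by
    intro a b hab heq
    have h2 : cnt G φ s(φ a, φ b) = 0 :=
      (hφ _).1 (by rw [Sym2.mk_isDiag_iff]; exact heq)
    have h1 : cnt G φ s(φ a, φ b) ≠ 0 := by
      unfold cnt
      simp only [← Nat.pos_iff_ne_zero, Finset.card_pos]
      refine ⟨s(a, b), ?_⟩
      simp only [Finset.mem_filter, SimpleGraph.mem_edgeFinset]
      exact ⟨hab, Sym2.map_pair_eq _ _ _⟩
    exact h1 h2
  refine ⟨⟨φ, fun hab => ?_⟩, rfl, fun e _ => ?_⟩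
  · rw [SimpleGraph.top_adj]
    exact hadj hab
  · exact (hφ e).2

open scoped Classical in
lemma pNat_spec {V : Type} [Fintype V] (G : SimpleGraph V)
    (hEven : ∃ f : G →g (⊤ : SimpleGraph (Fin (Fintype.card V))), IsEvenHom f) :
    ∃ f : G →g (⊤ : SimpleGraph (Fin (Fintype.card V))), IsEvenHom f ∧
      Fintype.card V - (Finset.univ.image ⇑f).card = pNat G := by
  obtain ⟨f, hf⟩ := hEven
  have hne : {k : ℕ | ∃ f : G →g (⊤ : SimpleGraph (Fin (Fintype.card V))), IsEvenHom f ∧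
      Fintype.card V - (Finset.univ.image ⇑f).card = k}.Nonempty :=
    ⟨_, f, hf, rfl⟩
  exact Nat.sInf_mem hne

open scoped Classical in
lemma pNat_le_of_good {V : Type} [Fintype V] {G : SimpleGraph V} {n : ℕ}
    {φ : V → Fin n} (hφ : Good G φ) :
    pNat G ≤ Fintype.card V - (univ.image φ).card := by
  classical
  rcases isEmpty_or_nonempty V with hV | hV
  · have h0 : (univ.image φ).card = 0 := by simp [Finset.card_eq_zero, Finset.univ_eq_empty]
    rw [h0]
    -- V empty : φ itself (composed with the unique map) gives an even hom
    have hcard : Fintype.card V = 0 := Fintype.card_eq_zero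
    have : Good G (fun v : V => (hV.elim v : Fin (Fintype.card V))) := by
      intro p
      constructor
      · intro _
        unfold cnt
        simp only [Finset.card_eq_zero, Finset.filter_eq_empty_iff]
        intro e' he' _
        induction e' using Sym2.ind with
        | _ a b => exact hV.elim a
      · have h0' : cnt G (fun v : V => (hV.elim v : Fin (Fintype.card V))) p = 0 := by
          unfold cnt
          simp only [Finset.card_eq_zero, Finset.filter_eq_empty_iff]
          intro e' he' _
          induction e' using Sym2.ind with
          | _ a b => exact hV.elim a
        rw [h0']
        exact Even.zero
    obtain ⟨f, hfφ, hfe⟩ := evenHom_of_good this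
    have himg : (Finset.univ.image ⇑f).card = (univ.image φ).card := by
      simp [Finset.univ_eq_empty]
    unfold pNat
    have hz : (Finset.univ.image ⇑f).card = 0 := by omega
    rw [← hz]
    exact Nat.sInf_le ⟨f, hfe, rfl⟩
  · -- V nonempty, so Fintype.card V > 0
    have hpos : 0 < Fintype.card V := Fintype.card_pos
    have hle : Fintype.card ↥(univ.image φ) ≤ Fintype.card (Fin (Fintype.card V)) := by
      rw [Fintype.card_coe, Fintype.card_fin]
      exact le_trans (Finset.card_image_le) (by simp)
    obtain ⟨emb⟩ := Function.Embedding.nonempty_of_card_le hle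
    set σ : Fin n → Fin (Fintype.card V) :=
      fun x => if h : x ∈ univ.image φ then emb ⟨x, h⟩ else ⟨0, hpos⟩ with hσdef
    have hinj : Set.InjOn σ (Set.range φ) := by
      intro a ha b hb hab
      have ha' : a ∈ univ.image φ := by
        obtain ⟨v, rfl⟩ := ha; exact Finset.mem_image_of_mem φ (mem_univ v)
      have hb' : b ∈ univ.image φ := by
        obtain ⟨v, rfl⟩ := hb; exact Finset.mem_image_of_mem φ (mem_univ v)
      rw [hσdef] at hab
      simp only [ha', hb', dif_pos] at hab
      exact Subtype.mk_eq_mk.mp (emb.injective hab)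
    have hg : Good G (σ ∘ φ) := good_comp hφ hinj
    obtain ⟨f, hfφ, hfe⟩ := evenHom_of_good hg
    have hrange : (↑(univ.image φ) : Set (Fin n)) = Set.range φ := by
      rw [Finset.coe_image, Finset.coe_univ, Set.image_univ]
    have himg : (Finset.univ.image ⇑f).card = (univ.image φ).card := by
      rw [hfφ]
      have h1 : univ.image (σ ∘ φ) = (univ.image φ).image σ := by
        rw [Finset.image_image]
      rw [h1]
      apply Finset.card_image_of_injOn
      rw [hrange]
      exact hinj
    unfold pNat
    rw [← himg]
    exact Nat.sInf_le ⟨f, hfe, rfl⟩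


open scoped Classical in
lemma card_good_le {V : Type} [Fintype V] (G : SimpleGraph V) (n : ℕ)
    (hn : Fintype.card V - pNat G ≤ n) :
    (univ.filter (fun φ : V → Fin n => Good G φ)).card ≤
      n ^ (Fintype.card V - pNat G) * (Fintype.card V - pNat G) ^ (Fintype.card V) := by
  classical
  set s := Fintype.card V - pNat G with hs
  have hsub : (univ.filter (fun φ : V → Fin n => Good G φ)) ⊆
      (univ.powersetCard s).biUnion
        (fun S => univ.filter (fun φ : V → Fin n => ∀ v, φ v ∈ S)) := by
    intro φ hφ
    rw [mem_filter] at hφ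
    have himg : (univ.image φ).card ≤ s := by
      have h1 := pNat_le_of_good hφ.2
      have h2 : (univ.image φ).card ≤ Fintype.card V :=
        le_trans Finset.card_image_le (by simp)
      omega
    obtain ⟨S, hS1, hS2⟩ := Finset.exists_superset_card_eq himg (by simpa using hn)
    rw [Finset.mem_biUnion]
    refine ⟨S, ?_, ?_⟩
    · rw [Finset.mem_powersetCard]
      exact ⟨Finset.subset_univ S, hS2⟩
    · rw [mem_filter]
      exact ⟨mem_univ _, fun v => hS1 (Finset.mem_image_of_mem φ (mem_univ v))⟩
  calc (univ.filter (fun φ : V → Fin n => Good G φ)).card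
      ≤ ((univ.powersetCard s).biUnion
        (fun S => univ.filter (fun φ : V → Fin n => ∀ v, φ v ∈ S))).card :=
        Finset.card_le_card hsub
    _ ≤ ∑ S ∈ univ.powersetCard s,
          (univ.filter (fun φ : V → Fin n => ∀ v, φ v ∈ S)).card :=
        Finset.card_biUnion_le
    _ ≤ ∑ _S ∈ univ.powersetCard s, s ^ (Fintype.card V) := by
        refine Finset.sum_le_sum (fun S hS => ?_)
        rw [Finset.mem_powersetCard] at hS
        have hsubim : (univ.filter (fun φ : V → Fin n => ∀ v, φ v ∈ S)) ⊆
            (univ : Finset (V → ↥S)).image (fun g => fun v => ↑(g v)) := by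
          intro φ hφ
          rw [mem_filter] at hφ
          exact Finset.mem_image.mpr ⟨fun v => ⟨φ v, hφ.2 v⟩, mem_univ _, rfl⟩
        calc (univ.filter (fun φ : V → Fin n => ∀ v, φ v ∈ S)).card
            ≤ ((univ : Finset (V → ↥S)).image (fun g => fun v => ↑(g v))).card :=
              Finset.card_le_card hsubim
          _ ≤ (univ : Finset (V → ↥S)).card := Finset.card_image_le
          _ = s ^ Fintype.card V := by
              rw [Finset.card_univ, Fintype.card_fun, Fintype.card_coe, hS.2]
    _ = (univ.powersetCard s).card * s ^ (Fintype.card V) := by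
        rw [Finset.sum_const, smul_eq_mul]
    _ ≤ n ^ s * s ^ (Fintype.card V) := by
        apply Nat.mul_le_mul_right
        rw [Finset.card_powersetCard, Finset.card_univ, Fintype.card_fin]
        exact Nat.choose_le_pow n s

open scoped Classical in
lemma card_good_ge {V : Type} [Fintype V] (G : SimpleGraph V)
    {f : G →g (⊤ : SimpleGraph (Fin (Fintype.card V)))} (hf : IsEvenHom f)
    (n : ℕ) (hn : 0 < n) :
    n.descFactorial ((Finset.univ.image ⇑f).card) ≤
      (univ.filter (fun φ : V → Fin n => Good G φ)).card := by
  classical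
  set T := Finset.univ.image ⇑f with hT
  have hgood : Good G ⇑f := good_of_evenHom hf
  have hinj : ∀ ρ : ↥T ↪ Fin n,
      Set.InjOn (fun x => if h : x ∈ T then ρ ⟨x, h⟩ else (⟨0, hn⟩ : Fin n))
        (Set.range ⇑f) := by
    intro ρ a ha b hb hab
    have ha' : a ∈ T := by
      obtain ⟨v, rfl⟩ := ha; exact Finset.mem_image_of_mem _ (mem_univ v)
    have hb' : b ∈ T := by
      obtain ⟨v, rfl⟩ := hb; exact Finset.mem_image_of_mem _ (mem_univ v)
    simp only [ha', hb', dif_pos] at hab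
    exact Subtype.mk_eq_mk.mp (ρ.injective hab)
  have hmemJ : ∀ ρ : ↥T ↪ Fin n,
      ((fun x => if h : x ∈ T then ρ ⟨x, h⟩ else (⟨0, hn⟩ : Fin n)) ∘ ⇑f) ∈
        univ.filter (fun φ : V → Fin n => Good G φ) := by
    intro ρ
    rw [mem_filter]
    exact ⟨mem_univ _, good_comp hgood (hinj ρ)⟩
  let J : (↥T ↪ Fin n) → ↥(univ.filter (fun φ : V → Fin n => Good G φ)) :=
    fun ρ => ⟨(fun x => if h : x ∈ T then ρ ⟨x, h⟩ else (⟨0, hn⟩ : Fin n)) ∘ ⇑f, hmemJ ρ⟩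
  have hJinj : Function.Injective J := by
    intro ρ₁ ρ₂ h
    have h1 : ((fun x => if h : x ∈ T then ρ₁ ⟨x, h⟩ else (⟨0, hn⟩ : Fin n)) ∘ ⇑f)
        = ((fun x => if h : x ∈ T then ρ₂ ⟨x, h⟩ else (⟨0, hn⟩ : Fin n)) ∘ ⇑f) :=
      congrArg Subtype.val h
    ext x
    obtain ⟨xval, hx⟩ := x
    obtain ⟨v, _, rfl⟩ := Finset.mem_image.mp hx
    have h2 := congrFun h1 v
    simp only [Function.comp_apply] at h2
    rw [dif_pos hx, dif_pos hx] at h2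
    exact congrArg Fin.val h2
  calc n.descFactorial T.card = Fintype.card (↥T ↪ Fin n) := by
        rw [Fintype.card_embedding_eq, Fintype.card_coe, Fintype.card_fin]
    _ ≤ Fintype.card ↥(univ.filter (fun φ : V → Fin n => Good G φ)) :=
        Fintype.card_le_of_injective J hJinj
    _ = (univ.filter (fun φ : V → Fin n => Good G φ)).card := Fintype.card_coe _

/-- `E(t(G, K_n^{±1})) = Θ(n^{−p(G)})` as `n → ∞`, for any fixed graph `G` admitting an
even homomorphism into a complete graph. -/
theorem expTRand_theta {V : Type} [Fintype V] (G : SimpleGraph V)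
    (hEven : ∃ f : G →g (⊤ : SimpleGraph (Fin (Fintype.card V))), IsEvenHom f) :
    ∃ c C : ℝ, 0 < c ∧ 0 < C ∧ ∃ N : ℕ, ∀ n : ℕ, N ≤ n →
      c * (n : ℝ) ^ (-(pNat G : ℤ)) ≤ expTRand G n ∧
      expTRand G n ≤ C * (n : ℝ) ^ (-(pNat G : ℤ)) := by
  classical
  obtain ⟨f₀, hf₀, himg₀⟩ := pNat_spec G hEven
  have himg_le : (Finset.univ.image ⇑f₀).card ≤ Fintype.card V :=
    le_trans Finset.card_image_le (by simp)
  set p := pNat G with hp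
  set s := Fintype.card V - p with hs
  have hseq : (Finset.univ.image ⇑f₀).card = s := by omega
  refine ⟨(1/2:ℝ)^s, (s:ℝ)^(Fintype.card V) + 1, by positivity, by positivity,
    2*Fintype.card V + 1, fun n hn => ?_⟩
  have hn0 : 0 < n := by omega
  have hsV : s ≤ Fintype.card V := by omega
  have hsn : s ≤ n := by omega
  have h2sn : 2 * s ≤ n := by omega
  have hnR : (0:ℝ) < n := by exact_mod_cast hn0
  rw [expTRand_eq]
  have hpow : (n:ℝ) ^ (-(p:ℤ)) * (n:ℝ) ^ (Fintype.card V) = (n:ℝ) ^ s := by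
    rw [← zpow_natCast (n:ℝ) (Fintype.card V), ← zpow_add₀ (ne_of_gt hnR),
      ← zpow_natCast (n:ℝ) s]
    congr 1
    omega
  constructor
  · rw [le_div_iff₀ (by positivity), mul_assoc, hpow]
    have hlow := card_good_ge G hf₀ n hn0
    rw [hseq] at hlow
    have h1 : ((n.descFactorial s : ℕ) : ℝ) ≤
        (((univ.filter (fun φ : V → Fin n => Good G φ)).card : ℕ) : ℝ) :=
      Nat.cast_le.mpr hlow
    have h2 : ((n + 1 - s)^s : ℕ) ≤ n.descFactorial s := Nat.pow_sub_le_descFactorial n s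
    have hcast : ((n + 1 - s : ℕ) : ℝ) = (n:ℝ) + 1 - (s:ℝ) := by
      have hs1 : s ≤ n + 1 := by omega
      push_cast [hs1]
      ring
    have h3 : (1/2:ℝ) * n ≤ ((n + 1 - s : ℕ) : ℝ) := by
      rw [hcast]
      have : 2 * (s:ℝ) ≤ (n:ℝ) := by exact_mod_cast h2sn
      linarith
    calc (1/2:ℝ)^s * (n:ℝ)^s = ((1/2:ℝ)*n)^s := by rw [mul_pow]
      _ ≤ (((n+1-s : ℕ)):ℝ)^s := pow_le_pow_left₀ (by positivity) h3 s
      _ = (((n+1-s)^s : ℕ):ℝ) := by push_cast; ring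
      _ ≤ ((n.descFactorial s : ℕ):ℝ) := Nat.cast_le.mpr h2
      _ ≤ _ := h1
  · rw [div_le_iff₀ (by positivity), mul_assoc, hpow]
    have hup := card_good_le G n (by omega)
    calc (((univ.filter (fun φ : V → Fin n => Good G φ)).card : ℕ) : ℝ)
        ≤ ((n ^ s * s ^ (Fintype.card V) : ℕ) : ℝ) := Nat.cast_le.mpr hup
      _ = (s:ℝ)^(Fintype.card V) * (n:ℝ)^s := by push_cast; ring
      _ ≤ ((s:ℝ)^(Fintype.card V) + 1) * (n:ℝ)^s := by
          apply mul_le_mul_of_nonneg_right (by linarith) (by positivity)
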